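/- arXiv:1109.6427 — 4 statements merged into one kernel-verified Lean document; each statement's English description precedes it below -/
import Mathlib

section
/- Let 𝔉 be a field, m a positive integer, and ĝ a finite-dimensional perfect ℤ/mℤ-graded Lie algebra over 𝔉. Let 𝔏 = ⊕_{i=1}^∞ g_{i mod m} ⊗ t^i be the associated twisted loop algebra, and for a positive integer D let 𝔏^D be the direct sum of D copies of 𝔏. Then there exists a constant C, depending only on ĝ (with its grading), such that for every positive integer D and every 𝔉-Lie subalgebra 𝔥 of 𝔏^D of finite codimension, codim_{𝔏^D}[𝔥,𝔥] ≤ C·(codim_{𝔏^D}𝔥 + D). -/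
open TensorProduct

namespace LoopThm
universe u v w
variable {F : Type u} [Field F]




variable {F : Type u} [Field F]

/-- codimension of a subspace, as a cardinal -/
noncomputable def cd (F : Type u) [Field F] {M : Type v} [AddCommGroup M] [Module F M]
    (U : Submodule F M) : Cardinal.{v} := Module.rank F (M ⧸ U)

section SameUniverse

variable {M M₁ M₂ : Type v} [AddCommGroup M] [Module F M] [AddCommGroup M₁] [Module F M₁]
  [AddCommGroup M₂] [Module F M₂]

theorem cd_mono {U V : Submodule F M} (h : U ≤ V) : cd F V ≤ cd F U := by
  apply LinearMap.rank_le_of_surjective (U.mapQ V LinearMap.id h)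
  intro y
  obtain ⟨x, rfl⟩ := V.mkQ_surjective y
  exact ⟨U.mkQ x, rfl⟩

theorem cd_inf_le (U V : Submodule F M) : cd F (U ⊓ V) ≤ cd F U + cd F V := by
  have hker : U ⊓ V ≤ LinearMap.ker (U.mkQ.prod V.mkQ) := by
    rw [LinearMap.ker_prod, Submodule.ker_mkQ, Submodule.ker_mkQ]
  set φ := (U ⊓ V).liftQ (U.mkQ.prod V.mkQ) hker
  have hinj : Function.Injective φ := by
    rw [← LinearMap.ker_eq_bot, Submodule.ker_liftQ_eq_bot]
    rw [LinearMap.ker_prod, Submodule.ker_mkQ, Submodule.ker_mkQ]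
  calc cd F (U ⊓ V) = Module.rank F (LinearMap.range φ) := (rank_range_of_injective φ hinj).symm
    _ ≤ Module.rank F ((M ⧸ U) × (M ⧸ V)) := by
        conv_rhs => rw [← rank_top F]
        exact Submodule.rank_mono le_top
    _ = cd F U + cd F V := rank_prod'

theorem cd_top : cd F (⊤ : Submodule F M) = 0 := by
  have : Subsingleton (M ⧸ (⊤ : Submodule F M)) := by
    constructor
    intro a b
    obtain ⟨x, rfl⟩ := (⊤ : Submodule F M).mkQ_surjective a
    obtain ⟨y, rfl⟩ := (⊤ : Submodule F M).mkQ_surjective b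
    rw [Submodule.mkQ_apply, Submodule.mkQ_apply, Submodule.Quotient.eq]
    trivial
  exact rank_subsingleton' F _

theorem cd_finsetInf {ι : Type w} (s : Finset ι) (U : ι → Submodule F M) :
    cd F (s.inf U) ≤ s.sum fun i => cd F (U i) := by
  classical
  induction s using Finset.induction_on with
  | empty => simp [cd_top]
  | insert _ _ h ih =>
    rename_i a t
    rw [Finset.inf_insert, Finset.sum_insert h]
    exact (cd_inf_le _ _).trans (add_le_add le_rfl ih)

theorem map_mkQ_self (U : Submodule F M) : U.map U.mkQ = ⊥ := by
  ext x
  simp only [Submodule.mem_map, Submodule.mem_bot]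
  constructor
  · rintro ⟨y, hy, rfl⟩
    simpa [Submodule.Quotient.mk_eq_zero] using hy
  · rintro rfl
    exact ⟨0, U.zero_mem, map_zero _⟩

theorem cd_le_rank_of_sup (U S : Submodule F M) (h : U ⊔ S = ⊤) :
    cd F U ≤ Module.rank F S := by
  have h2 : S.map U.mkQ = ⊤ := by
    have : (U ⊔ S).map U.mkQ = ⊤ := by
      rw [h, Submodule.map_top, Submodule.range_mkQ]
    rwa [Submodule.map_sup, map_mkQ_self, bot_sup_eq] at this
  calc cd F U = Module.rank F (⊤ : Submodule F (M ⧸ U)) := (rank_top F _).symm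
    _ = Module.rank F (S.map U.mkQ) := by rw [h2]
    _ ≤ Module.rank F S := rank_map_le _ _

theorem exists_compl_rank (U : Submodule F M) :
    ∃ S : Submodule F M, U ⊔ S = ⊤ ∧ Module.rank F S = cd F U := by
  obtain ⟨S, hS⟩ := Submodule.exists_isCompl U
  refine ⟨S, hS.sup_eq_top, ?_⟩
  rw [cd, ← (Submodule.quotientEquivOfIsCompl U S hS).rank_eq]

theorem rank_finsetSup_le {ι : Type w} (s : Finset ι) (U : ι → Submodule F M) :
    Module.rank F ↥(s.sup U) ≤ s.sum fun i => Module.rank F ↥(U i) := by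
  classical
  induction s using Finset.induction_on with
  | empty =>
      simp only [Finset.sup_empty, Finset.sum_empty]
      simp [rank_subsingleton']
  | insert _ _ h ih =>
    rename_i a t
    rw [Finset.sup_insert, Finset.sum_insert h]
    refine le_trans ?_ (add_le_add le_rfl ih)
    have := Submodule.rank_sup_add_rank_inf_eq (U a) (t.sup U)
    calc Module.rank F ↥((U a) ⊔ t.sup U)
        ≤ Module.rank F ↥((U a) ⊔ t.sup U) + Module.rank F ↥((U a) ⊓ t.sup U) := le_self_add
      _ = Module.rank F ↥(U a) + Module.rank F ↥(t.sup U) := this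
end SameUniverse




section Cross
variable {M : Type v} {M₁ : Type w} [AddCommGroup M] [Module F M] [AddCommGroup M₁] [Module F M₁]

/-- cross-universe codim bound -/
theorem cd_comap_le_nat (f : M₁ →ₗ[F] M) (U T : Submodule F M) (hf : LinearMap.range f ≤ T)
    (n : ℕ) (hn : Module.rank F (T.map U.mkQ) ≤ n) :
    cd F (U.comap f) ≤ n := by
  have hker : U.comap f ≤ LinearMap.ker (U.mkQ ∘ₗ f) := by
    intro x hx
    simp only [LinearMap.mem_ker, LinearMap.comp_apply, Submodule.mkQ_apply,
      Submodule.Quotient.mk_eq_zero]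
    exact hx
  set φ := (U.comap f).liftQ (U.mkQ ∘ₗ f) hker with hφ
  have hinj : Function.Injective φ := by
    rw [← LinearMap.ker_eq_bot, Submodule.ker_liftQ_eq_bot]
    intro x hx
    simpa only [LinearMap.mem_ker, LinearMap.comp_apply, Submodule.mkQ_apply,
      Submodule.Quotient.mk_eq_zero, Submodule.mem_comap] using hx
  have h1 := lift_rank_range_of_injective φ hinj
  have h2 : Module.rank F (LinearMap.range φ) ≤ n := by
    refine le_trans ?_ hn
    apply Submodule.rank_mono
    rw [Submodule.range_liftQ, LinearMap.range_comp]
    exact Submodule.map_mono hf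
  have h3 : Cardinal.lift.{w} (Module.rank F (LinearMap.range φ)) ≤ Cardinal.lift.{w} (n : Cardinal.{v}) :=
    Cardinal.lift_le.mpr h2
  simp only [cd]
  have h4 : Cardinal.lift.{v} (Module.rank F (M₁ ⧸ U.comap f)) ≤
      Cardinal.lift.{v} ((n : Cardinal.{w})) := by
    calc Cardinal.lift.{v} (Module.rank F (M₁ ⧸ U.comap f))
        = Cardinal.lift.{w} (Module.rank F (LinearMap.range φ)) := h1.symm
      _ ≤ Cardinal.lift.{w} ((n : Cardinal.{v})) := h3
      _ = Cardinal.lift.{v} ((n : Cardinal.{w})) := by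
          rw [Cardinal.lift_natCast, Cardinal.lift_natCast]
  exact Cardinal.lift_le.mp h4

theorem rank_map_le_nat (f : M₁ →ₗ[F] M) (p : Submodule F M₁) (n : ℕ)
    (hn : Module.rank F p ≤ n) : Module.rank F (p.map f) ≤ n := by
  have := lift_rank_map_le f p
  have h2 : Cardinal.lift.{w} (Module.rank F (p.map f)) ≤ Cardinal.lift.{v} ((n : Cardinal.{w})) :=
    this.trans (Cardinal.lift_le.mpr hn)
  rw [Cardinal.lift_natCast] at h2
  have h3 : Cardinal.lift.{w} (Module.rank F (p.map f)) ≤ Cardinal.lift.{w} ((n : Cardinal.{v})) := by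
    rw [Cardinal.lift_natCast]; exact h2
  exact Cardinal.lift_le.mp h3
end Cross

section Exact
variable {M M₁ M₂ : Type v} [AddCommGroup M] [Module F M] [AddCommGroup M₁] [Module F M₁]
  [AddCommGroup M₂] [Module F M₂]

/-- rank additivity along a short exact sequence, applied to codimensions -/
theorem cd_split (π : M →ₗ[F] M₁) (ι : M₂ →ₗ[F] M) (hπ : Function.Surjective π)
    (hι : Function.Injective ι) (hker : LinearMap.ker π = LinearMap.range ι)
    (U : Submodule F M) :
    cd F U = cd F (U.map π) + cd F (U.comap ι) := by
  have hle : U ≤ LinearMap.ker ((U.map π).mkQ ∘ₗ π) := by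
    intro u hu
    simp only [LinearMap.mem_ker, LinearMap.comp_apply, Submodule.mkQ_apply,
      Submodule.Quotient.mk_eq_zero]
    exact Submodule.mem_map_of_mem hu
  set πb := U.liftQ ((U.map π).mkQ ∘ₗ π) hle with hπb
  have hsurj : Function.Surjective πb := by
    rw [← LinearMap.range_eq_top, Submodule.range_liftQ, LinearMap.range_comp,
      LinearMap.range_eq_top.mpr hπ, Submodule.map_top, Submodule.range_mkQ]
  -- rank (M/U) = rank range πb + rank ker πb
  have hrank := LinearMap.rank_range_add_rank_ker πb
  have hrange : Module.rank F (LinearMap.range πb) = cd F (U.map π) := by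
    rw [LinearMap.range_eq_top.mpr hsurj, rank_top]
    rfl
  -- identify the kernel
  have hkerb : LinearMap.ker πb = (LinearMap.ker π).map U.mkQ := by
    rw [hπb, Submodule.ker_liftQ, LinearMap.ker_comp, Submodule.ker_mkQ,
      Submodule.comap_map_eq]
    rw [Submodule.map_sup]
    have : U.map U.mkQ = ⊥ := by
      ext x
      simp only [Submodule.mem_map, Submodule.mem_bot]
      constructor
      · rintro ⟨y, hy, rfl⟩
        simpa [Submodule.Quotient.mk_eq_zero] using hy
      · rintro rfl
        exact ⟨0, U.zero_mem, map_zero _⟩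
    rw [this, sup_comm, sup_bot_eq]
  -- the kernel has the rank of M₂ ⧸ U.comap ι
  have hle2 : U.comap ι ≤ LinearMap.ker (U.mkQ ∘ₗ ι) := by
    intro x hx
    simp only [LinearMap.mem_ker, LinearMap.comp_apply, Submodule.mkQ_apply,
      Submodule.Quotient.mk_eq_zero]
    exact hx
  set ιb := (U.comap ι).liftQ (U.mkQ ∘ₗ ι) hle2 with hιb
  have hinj : Function.Injective ιb := by
    rw [← LinearMap.ker_eq_bot, Submodule.ker_liftQ_eq_bot]
    intro x hx
    simpa only [LinearMap.mem_ker, LinearMap.comp_apply, Submodule.mkQ_apply,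
      Submodule.Quotient.mk_eq_zero, Submodule.mem_comap] using hx
  have hrange2 : LinearMap.range ιb = (LinearMap.ker π).map U.mkQ := by
    rw [hιb, Submodule.range_liftQ, LinearMap.range_comp, hker]
  have h2 : cd F (U.comap ι) = Module.rank F (LinearMap.ker πb) := by
    rw [hkerb, ← hrange2]
    exact (rank_range_of_injective ιb hinj).symm
  simp only [cd] at *
  rw [← hrank, hrange, h2]
end Exact



theorem rank_sup_le {M : Type v} [AddCommGroup M] [Module F M] (p q : Submodule F M) :
    Module.rank F ↥(p ⊔ q) ≤ Module.rank F p + Module.rank F q := by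
  have := Submodule.rank_sup_add_rank_inf_eq p q
  calc Module.rank F ↥(p ⊔ q)
      ≤ Module.rank F ↥(p ⊔ q) + Module.rank F ↥(p ⊓ q) := le_self_add
    _ = Module.rank F p + Module.rank F q := this



open Polynomial in
theorem exists_low_degree (U : Submodule F (Polynomial F)) (n : ℕ)
    (hU : cd F U ≤ n) : ∃ p ∈ U, p ≠ 0 ∧ p.degree < ((n+1 : ℕ) : WithBot ℕ) := by
  by_contra hcon
  push_neg at hcon
  have hdisj : degreeLT F (n+1) ⊓ U = ⊥ := by
    rw [eq_bot_iff]
    intro p ⟨hp1, hp2⟩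
    rw [Submodule.mem_bot]
    by_contra hp0
    exact absurd (mem_degreeLT.mp hp1) (not_lt_of_ge (hcon p hp2 hp0))
  set ψ := U.mkQ ∘ₗ (degreeLT F (n+1)).subtype with hψ
  have hinj : Function.Injective ψ := by
    rw [← LinearMap.ker_eq_bot, hψ, LinearMap.ker_comp, Submodule.ker_mkQ]
    rw [Submodule.eq_bot_iff]
    intro x hx
    have : (x : Polynomial F) ∈ degreeLT F (n+1) ⊓ U := ⟨x.2, hx⟩
    rw [hdisj, Submodule.mem_bot] at this
    exact Subtype.ext this
  have h1 : Module.rank F (degreeLT F (n+1)) ≤ cd F U := by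
    calc Module.rank F (degreeLT F (n+1))
        = Module.rank F (LinearMap.range ψ) := (rank_range_of_injective ψ hinj).symm
      _ ≤ Module.rank F (⊤ : Submodule F (Polynomial F ⧸ U)) := Submodule.rank_mono le_top
      _ = cd F U := by rw [rank_top]; rfl
  have h2 : Module.rank F (degreeLT F (n+1)) = (n+1 : ℕ) := by
    rw [(degreeLTEquiv F (n+1)).rank_eq]
    simp
  rw [h2] at h1
  have := h1.trans hU
  rw [Nat.cast_le] at this
  omega

open Polynomial in
theorem cd_mul_le_polynomial (U V : Submodule F (Polynomial F)) (a b : ℕ)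
    (ha : cd F U ≤ a) (hb : cd F V ≤ b) :
    cd F (U * V) ≤ ((a + b + 1 : ℕ) : Cardinal) := by
  obtain ⟨p, hpU, hp0, hpdeg⟩ := exists_low_degree U a ha
  set q := p * C (leadingCoeff p)⁻¹ with hqdef
  have hq : q.Monic := monic_mul_leadingCoeff_inv hp0
  have hqU : q ∈ U := by
    rw [hqdef, mul_comm, ← smul_eq_C_mul]
    exact U.smul_mem _ hpU
  have hqdeg : q.degree < ((a+1 : ℕ) : WithBot ℕ) := by
    rw [hqdef, degree_mul_leadingCoeff_inv p hp0]
    exact hpdeg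
  obtain ⟨S, hS, hSrank⟩ := exists_compl_rank V
  set X' := S.map (LinearMap.mulLeft F q) with hX'
  have hcover : U * V ⊔ (X' ⊔ degreeLT F (a+1)) = ⊤ := by
    rw [eq_top_iff]
    intro f _
    have hdecomp : f %ₘ q + q * (f /ₘ q) = f := modByMonic_add_div f q
    obtain ⟨v, hv, s, hs, hvs⟩ := Submodule.mem_sup.mp
      (by rw [hS]; exact Submodule.mem_top : (f /ₘ q) ∈ V ⊔ S)
    have h1 : q * v ∈ U * V := Submodule.mul_mem_mul hqU hv
    have h2 : q * s ∈ X' := ⟨s, hs, rfl⟩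
    have h3 : f %ₘ q ∈ degreeLT F (a+1) := by
      rw [mem_degreeLT]
      exact lt_trans (degree_modByMonic_lt f hq) hqdeg
    have : f = q * v + (q * s + f %ₘ q) := by
      calc f = f %ₘ q + q * (f /ₘ q) := hdecomp.symm
        _ = f %ₘ q + (q * v + q * s) := by rw [← hvs]; ring_nf
        _ = q * v + (q * s + f %ₘ q) := by ring
    rw [this]
    exact Submodule.add_mem _ (Submodule.mem_sup_left h1)
      (Submodule.mem_sup_right (Submodule.add_mem _ (Submodule.mem_sup_left h2)
        (Submodule.mem_sup_right h3)))
  have hfinal := cd_le_rank_of_sup (U * V) _ hcover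
  refine hfinal.trans ?_
  refine (rank_sup_le _ _).trans ?_
  have hr1 : Module.rank F X' ≤ (b : Cardinal) := by
    rw [hX']
    exact (rank_map_le _ _).trans (by rw [hSrank]; exact hb)
  have hr2 : Module.rank F (degreeLT F (a+1)) = ((a+1 : ℕ) : Cardinal) := by
    rw [(degreeLTEquiv F (a+1)).rank_eq]
    simp
  rw [hr2]
  calc Module.rank F X' + ((a+1:ℕ) : Cardinal) ≤ (b : Cardinal) + ((a+1:ℕ) : Cardinal) :=
        add_le_add hr1 le_rfl
    _ = ((a + b + 1 : ℕ) : Cardinal) := by push_cast; ring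




section PiMaps
variable (F) (D : ℕ)

noncomputable def πP : (Fin (D+1) → Polynomial F) →ₐ[F] Polynomial F :=
  Pi.evalAlgHom F (fun _ => Polynomial F) 0

noncomputable def τP : (Fin (D+1) → Polynomial F) →ₐ[F] (Fin D → Polynomial F) :=
  Pi.algHom F (fun _ => Polynomial F) (fun j => Pi.evalAlgHom F (fun _ => Polynomial F) j.succ)

noncomputable def ιP : (Fin D → Polynomial F) →ₗ[F] (Fin (D+1) → Polynomial F) :=
  LinearMap.pi (fun i => Fin.cases 0 (fun j => LinearMap.proj j) i)

@[simp] theorem ιP_zero (a : Fin D → Polynomial F) : ιP F D a 0 = 0 := rfl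
@[simp] theorem ιP_succ (a : Fin D → Polynomial F) (j : Fin D) : ιP F D a j.succ = a j := by
  simp only [ιP, LinearMap.pi_apply, Fin.cases_succ]
  rfl

theorem πP_surj : Function.Surjective (πP F D) := fun c => ⟨fun _ => c, rfl⟩

theorem ιP_inj : Function.Injective (ιP F D) := by
  intro a b h
  funext j
  have := congrFun h j.succ
  rwa [ιP_succ, ιP_succ] at this

theorem ker_πP : LinearMap.ker (πP F D).toLinearMap = LinearMap.range (ιP F D) := by
  ext x
  simp only [LinearMap.mem_ker, LinearMap.mem_range]
  constructor
  · intro hx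
    refine ⟨fun j => x j.succ, ?_⟩
    funext i
    induction i using Fin.cases with
    | zero => rw [ιP_zero]; exact hx.symm
    | succ j => rw [ιP_succ]
  · rintro ⟨a, rfl⟩
    exact ιP_zero F D a

theorem ι_mul (u' : Fin D → Polynomial F) (v : Fin (D+1) → Polynomial F) :
    ιP F D (u' * τP F D v) = ιP F D u' * v := by
  funext i
  induction i using Fin.cases with
  | zero => simp [Pi.mul_apply]
  | succ j =>
    simp only [Pi.mul_apply, ιP_succ]
    rfl
end PiMaps

theorem cd_mul_le_pi (D : ℕ) (U V : Submodule F (Fin D → Polynomial F))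
    (hU : cd F U < Cardinal.aleph0) (hV : cd F V < Cardinal.aleph0) :
    cd F (U * V) ≤ cd F U + cd F V + (D : Cardinal) := by
  induction D with
  | zero =>
    have : Subsingleton ((Fin 0 → Polynomial F) ⧸ (U * V)) := by
      constructor; intro a b
      obtain ⟨x, rfl⟩ := (U*V).mkQ_surjective a
      obtain ⟨y, rfl⟩ := (U*V).mkQ_surjective b
      congr
      funext i
      exact absurd i.2 (by omega)
    calc cd F (U * V) = 0 := rank_subsingleton' F _
      _ ≤ _ := zero_le
  | succ D ih =>
    set π := (πP F D).toLinearMap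
    set τ := (τP F D).toLinearMap
    set ι := ιP F D
    have hUsplit := cd_split π ι (πP_surj F D) (ιP_inj F D) (ker_πP F D) U
    have hVsplit := cd_split π ι (πP_surj F D) (ιP_inj F D) (ker_πP F D) V
    have hWsplit := cd_split π ι (πP_surj F D) (ιP_inj F D) (ker_πP F D) (U * V)
    -- finiteness of pieces
    have hUπ : cd F (U.map π) < Cardinal.aleph0 :=
      lt_of_le_of_lt (hUsplit ▸ le_self_add) hU
    have hVπ : cd F (V.map π) < Cardinal.aleph0 :=
      lt_of_le_of_lt (hVsplit ▸ le_self_add) hV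
    have hU' : cd F (U.comap ι) < Cardinal.aleph0 :=
      lt_of_le_of_lt (hUsplit ▸ le_add_self) hU
    have hV' : cd F (V.comap ι) < Cardinal.aleph0 :=
      lt_of_le_of_lt (hVsplit ▸ le_add_self) hV
    obtain ⟨a₁, ha₁⟩ := Cardinal.lt_aleph0.mp hUπ
    obtain ⟨b₁, hb₁⟩ := Cardinal.lt_aleph0.mp hVπ
    -- head bound
    have hmapmul : (U * V).map π = (U.map π) * (V.map π) := Submodule.map_mul U V (πP F D)
    have hhead : cd F ((U * V).map π) ≤ ((a₁ + b₁ + 1 : ℕ) : Cardinal) := by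
      rw [hmapmul]
      exact cd_mul_le_polynomial _ _ a₁ b₁ (le_of_eq ha₁) (le_of_eq hb₁)
    -- tail bound
    have htail1 : (U.comap ι) * (V.map τ) ≤ (U * V).comap ι := by
      rw [Submodule.mul_le]
      intro u' hu' w hw
      obtain ⟨v, hv, rfl⟩ := hw
      have : ιP F D (u' * τP F D v) ∈ U * V := by
        rw [ι_mul]
        exact Submodule.mul_mem_mul hu' hv
      exact this
    have hVτ : cd F (V.map τ) ≤ cd F (V.comap ι) := by
      apply cd_mono
      intro x hx
      exact ⟨ι x, hx, by funext j; exact ιP_succ F D x j⟩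
    have hVτfin : cd F (V.map τ) < Cardinal.aleph0 := lt_of_le_of_lt hVτ hV'
    have htail : cd F ((U * V).comap ι) ≤ cd F (U.comap ι) + cd F (V.comap ι) + (D : Cardinal) := by
      calc cd F ((U * V).comap ι) ≤ cd F ((U.comap ι) * (V.map τ)) := cd_mono htail1
        _ ≤ cd F (U.comap ι) + cd F (V.map τ) + (D : Cardinal) := ih _ _ hU' hVτfin
        _ ≤ _ := by
            refine add_le_add (add_le_add le_rfl hVτ) le_rfl
    -- assemble
    rw [hWsplit, hUsplit, hVsplit, ha₁, hb₁]
    calc cd F ((U*V).map π) + cd F ((U*V).comap ι)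
        ≤ ((a₁ + b₁ + 1 : ℕ) : Cardinal) +
          (cd F (U.comap ι) + cd F (V.comap ι) + (D : Cardinal)) := add_le_add hhead htail
      _ = ((a₁:Cardinal) + cd F (U.comap ι)) + ((b₁:Cardinal) + cd F (V.comap ι)) +
          ((D:Cardinal) + 1) := by push_cast; ring
      _ = _ := by push_cast; ring

section Lie
variable {g : Type v} [LieRing g] [LieAlgebra F g]

/-- `p ↦ X^k * p(X^m)` -/
noncomputable def εP (F : Type u) [Field F] (m k : ℕ) : Polynomial F →ₗ[F] Polynomial F :=
  (LinearMap.mulLeft F (Polynomial.X ^ k)) ∘ₗ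
    (Polynomial.aeval (Polynomial.X ^ m : Polynomial F)).toLinearMap

theorem εP_apply (m k : ℕ) (p : Polynomial F) :
    εP F m k p = Polynomial.X ^ k * Polynomial.aeval (Polynomial.X ^ m : Polynomial F) p := rfl

theorem εP_mul (m k l : ℕ) (p q : Polynomial F) :
    εP F m k p * εP F m l q = εP F m (k + l) (p * q) := by
  simp only [εP_apply, map_mul]
  ring

/-- `p ↦ (X^k p(X^m)) ⊗ x` -/
noncomputable def φP (m k : ℕ) (x : g) : Polynomial F →ₗ[F] (Polynomial F ⊗[F] g) :=
  ((TensorProduct.mk F (Polynomial F) g).flip x) ∘ₗ εP F m k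

theorem φP_apply (m k : ℕ) (x : g) (p : Polynomial F) :
    φP m k x p = (εP F m k p) ⊗ₜ[F] x := rfl

theorem φP_bracket (m k l : ℕ) (x y : g) (p q : Polynomial F) :
    ⁅φP m k x p, φP m l y q⁆ = φP m (k+l) ⁅x, y⁆ (p * q) := by
  rw [φP_apply, φP_apply, φP_apply, ← εP_mul]
  exact LieAlgebra.ExtendScalars.bracket_tmul F (Polynomial F) g g _ _ x y

theorem φP_mem_span (m k : ℕ) (hk : 1 ≤ k) (gr : ZMod m → Submodule F g) (x : g)
    (hx : x ∈ gr ((k : ℕ) : ZMod m)) (p : Polynomial F) :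
    φP m k x p ∈ Submodule.span F {z : Polynomial F ⊗[F] g |
      ∃ i : ℕ, 1 ≤ i ∧ ∃ x' ∈ gr (i : ZMod m), z = (Polynomial.X ^ i) ⊗ₜ[F] x'} := by
  induction p using Polynomial.induction_on' with
  | add p q hp hq => rw [map_add]; exact Submodule.add_mem _ hp hq
  | monomial n a =>
    have hcomp : φP m k x (Polynomial.monomial n a) =
        a • ((Polynomial.X ^ (k + m*n) : Polynomial F) ⊗ₜ[F] x) := by
      rw [φP_apply, εP_apply, Polynomial.aeval_monomial]
      have hpoly : (Polynomial.X : Polynomial F) ^ k *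
          ((algebraMap F (Polynomial F)) a * (Polynomial.X ^ m) ^ n) =
          a • (Polynomial.X ^ (k + m*n) : Polynomial F) := by
        rw [Polynomial.algebraMap_eq, Polynomial.smul_eq_C_mul, ← pow_mul, pow_add]
        ring
      rw [hpoly, TensorProduct.smul_tmul']
    rw [hcomp]
    refine Submodule.smul_mem _ _ (Submodule.subset_span ?_)
    refine ⟨k + m*n, by omega, x, ?_, rfl⟩
    have : ((k + m*n : ℕ) : ZMod m) = ((k : ℕ) : ZMod m) := by
      push_cast [ZMod.natCast_self]
      ring
    rw [this]
    exact hx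



/-- componentwise φ -/
noncomputable def φD (m k : ℕ) (x : g) (D : ℕ) :
    (Fin D → Polynomial F) →ₗ[F] (Fin D → Polynomial F ⊗[F] g) :=
  LinearMap.pi (fun j => φP m k x ∘ₗ LinearMap.proj j)

theorem φD_apply (m k : ℕ) (x : g) (D : ℕ) (a : Fin D → Polynomial F) (j : Fin D) :
    φD m k x D a j = φP m k x (a j) := rfl

theorem φD_single (m k : ℕ) (x : g) (D : ℕ) (j : Fin D) (p : Polynomial F) :
    φD m k x D (Pi.single j p) = Pi.single j (φP m k x p) := by
  funext j'
  rw [φD_apply]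
  by_cases h : j' = j
  · subst h; rw [Pi.single_eq_same, Pi.single_eq_same]
  · rw [Pi.single_eq_of_ne h, Pi.single_eq_of_ne h, map_zero]

def rep (m : ℕ) [NeZero m] (i : ZMod m) : ℕ := if i.val = 0 then m else i.val

theorem rep_pos (m : ℕ) [NeZero m] (i : ZMod m) : 1 ≤ rep m i := by
  unfold rep
  split
  · exact Nat.one_le_iff_ne_zero.mpr (NeZero.ne m)
  · omega

theorem rep_le (m : ℕ) [NeZero m] (i : ZMod m) : rep m i ≤ m := by
  unfold rep
  split
  · exact le_rfl
  · exact le_of_lt (ZMod.val_lt i)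

theorem rep_cast (m : ℕ) [NeZero m] (i : ZMod m) : ((rep m i : ℕ) : ZMod m) = i := by
  unfold rep
  split
  · rename_i h
    rw [ZMod.natCast_self]
    exact ((ZMod.val_eq_zero i).mp h).symm
  · exact ZMod.natCast_rightInverse i

theorem exists_perfect_family (m : ℕ) [NeZero m] [FiniteDimensional F g]
    (gr : ZMod m → Submodule F g)
    (hdec : DirectSum.IsInternal gr)
    (hperf : Submodule.span F {z : g | ∃ x y : g, z = ⁅x, y⁆} = ⊤) :
    ∃ t : Finset g, (∀ z ∈ t, ∃ k l : ℕ, 1 ≤ k ∧ k ≤ m ∧ 1 ≤ l ∧ l ≤ m ∧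
      ∃ x ∈ gr ((k : ℕ) : ZMod m), ∃ y ∈ gr ((l : ℕ) : ZMod m), z = ⁅x, y⁆) ∧
      Submodule.span F (↑t : Set g) = ⊤ := by
  classical
  set TT : Set g := {z : g | ∃ k l : ℕ, 1 ≤ k ∧ k ≤ m ∧ 1 ≤ l ∧ l ≤ m ∧
      ∃ x ∈ gr ((k : ℕ) : ZMod m), ∃ y ∈ gr ((l : ℕ) : ZMod m), z = ⁅x, y⁆} with hTT
  have hsupr : (⨆ i, gr i) = ⊤ := hdec.submodule_iSup_eq_top
  -- homogeneous brackets span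
  have claimA : ∀ (i : ZMod m) (x : g), x ∈ gr i → ∀ y : g, ⁅x, y⁆ ∈ Submodule.span F TT := by
    intro i x hx y
    have hS : (⊤ : Submodule F g) ≤
        (Submodule.span F TT).comap ((LieAlgebra.ad F g) x) := by
      rw [← hsupr]
      apply iSup_le
      intro j z hz
      simp only [Submodule.mem_comap, LieAlgebra.ad_apply]
      apply Submodule.subset_span
      exact ⟨rep m i, rep m j, rep_pos m i, rep_le m i, rep_pos m j, rep_le m j,
        x, by rw [rep_cast]; exact hx, z, by rw [rep_cast]; exact hz, rfl⟩
    have := hS (Submodule.mem_top : y ∈ ⊤)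
    simpa only [Submodule.mem_comap, LieAlgebra.ad_apply] using this
  have claimB : ∀ x y : g, ⁅x, y⁆ ∈ Submodule.span F TT := by
    intro x y
    set L : g →ₗ[F] g :=
      { toFun := fun x' => ⁅x', y⁆
        map_add' := fun a b => add_lie a b y
        map_smul' := fun c a => smul_lie c a y } with hL
    have hS : (⊤ : Submodule F g) ≤ (Submodule.span F TT).comap L := by
      rw [← hsupr]
      apply iSup_le
      intro j z hz
      simp only [Submodule.mem_comap, hL, LinearMap.coe_mk, AddHom.coe_mk]
      exact claimA j z hz y
    have := hS (Submodule.mem_top : x ∈ ⊤)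
    simpa only [Submodule.mem_comap, hL, LinearMap.coe_mk, AddHom.coe_mk] using this
  have hspanTT : Submodule.span F TT = ⊤ := by
    rw [eq_top_iff, ← hperf]
    rw [Submodule.span_le]
    rintro z ⟨x, y, rfl⟩
    exact claimB x y
  -- finite subfamily
  set b := Module.finBasis F g with hb
  have hmem : ∀ i, b i ∈ Submodule.span F TT := by
    intro i; rw [hspanTT]; trivial
  have hfin : ∀ i, ∃ T : Finset g, ↑T ⊆ TT ∧ (b i : g) ∈ Submodule.span F (T : Set g) :=
    fun i => Submodule.mem_span_finite_of_mem_span (hmem i)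
  choose Ts hTs hbTs using hfin
  refine ⟨Finset.univ.biUnion Ts, ?_, ?_⟩
  · intro z hz
    rw [Finset.mem_biUnion] at hz
    obtain ⟨i, _, hzi⟩ := hz
    exact hTs i hzi
  · rw [eq_top_iff]
    rw [← b.span_eq]
    rw [Submodule.span_le]
    rintro z ⟨i, rfl⟩
    refine Submodule.span_mono ?_ (hbTs i)
    intro w hw
    simp only [Finset.coe_biUnion, Set.mem_iUnion]
    exact ⟨i, Finset.mem_univ i, hw⟩

end Lie
end LoopThm

set_option maxHeartbeats 2000000 in
open LoopThm in
/-- Let `ĝ = ⊕_{i ∈ ℤ/mℤ} gr i` be a finite-dimensional perfect `ℤ/mℤ`-graded Lie algebra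
over a field `𝔉`, and let `𝔏 = ⊕_{i ≥ 1} g_{i mod m} ⊗ tⁱ ⊆ 𝔉[t] ⊗ ĝ` be the associated
twisted loop algebra.  Then there is a constant `C` depending only on `ĝ` (with its grading)
such that for every `D ≥ 1` and every `𝔉`-Lie subalgebra `𝔥` of `𝔏ᴰ` of finite codimension,
`codim_{𝔏ᴰ} [𝔥, 𝔥] ≤ C · (codim_{𝔏ᴰ} 𝔥 + D)`.  (Here, for a subspace `S ≤ 𝔏ᴰ`, the
codimension `codim_{𝔏ᴰ} S` is expressed as the rank of the image of `𝔏ᴰ` in the quotient of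
the ambient space by `S`.) -/
theorem stmt_0 (𝔉 : Type*) [Field 𝔉] (m : ℕ) (hm : 0 < m)
    (g : Type*) [LieRing g] [LieAlgebra 𝔉 g] [FiniteDimensional 𝔉 g]
    (gr : ZMod m → Submodule 𝔉 g)
    (hdec : DirectSum.IsInternal gr)
    (hbr : ∀ i j : ZMod m, ∀ x ∈ gr i, ∀ y ∈ gr j, ⁅x, y⁆ ∈ gr (i + j))
    (hperf : Submodule.span 𝔉 {z : g | ∃ x y : g, z = ⁅x, y⁆} = ⊤) :
    let 𝔏 : Submodule 𝔉 (Polynomial 𝔉 ⊗[𝔉] g) :=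
      Submodule.span 𝔉 {z : Polynomial 𝔉 ⊗[𝔉] g |
        ∃ i : ℕ, 1 ≤ i ∧ ∃ x ∈ gr (i : ZMod m), z = (Polynomial.X ^ i) ⊗ₜ[𝔉] x}
    ∃ C : ℕ, ∀ D : ℕ, 0 < D →
      ∀ 𝔥 : Submodule 𝔉 (Fin D → Polynomial 𝔉 ⊗[𝔉] g),
        let LD : Submodule 𝔉 (Fin D → Polynomial 𝔉 ⊗[𝔉] g) :=
          Submodule.pi Set.univ fun _ => 𝔏
        let dh : Submodule 𝔉 (Fin D → Polynomial 𝔉 ⊗[𝔉] g) :=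
          Submodule.span 𝔉 {z : Fin D → Polynomial 𝔉 ⊗[𝔉] g |
            ∃ x ∈ 𝔥, ∃ y ∈ 𝔥, z = fun i => ⁅x i, y i⁆}
        𝔥 ≤ LD →
        (∀ x ∈ 𝔥, ∀ y ∈ 𝔥, (fun i => ⁅x i, y i⁆) ∈ 𝔥) →
        Module.rank 𝔉 ↥(LD.map 𝔥.mkQ) < Cardinal.aleph0 →
        Module.rank 𝔉 ↥(LD.map dh.mkQ) ≤
          (C : Cardinal) * (Module.rank 𝔉 ↥(LD.map 𝔥.mkQ) + (D : Cardinal)) := by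
  intro 𝔏
  classical
  haveI : NeZero m := ⟨hm.ne'⟩
  set N := Module.finrank 𝔉 g with hN
  obtain ⟨t, ht_mem, ht_span⟩ := exists_perfect_family m gr hdec hperf
  -- choice of homogeneous data for each member of t
  have hchoose : ∀ z : g, ∃ k l : ℕ, ∃ x y : g, z ∈ t →
      (1 ≤ k ∧ k ≤ m ∧ 1 ≤ l ∧ l ≤ m ∧ x ∈ gr ((k : ℕ) : ZMod m) ∧
        y ∈ gr ((l : ℕ) : ZMod m) ∧ z = ⁅x, y⁆) := by
    intro z
    by_cases hz : z ∈ t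
    · obtain ⟨k, l, h1, h2, h3, h4, x, hx, y, hy, hzxy⟩ := ht_mem z hz
      exact ⟨k, l, x, y, fun _ => ⟨h1, h2, h3, h4, hx, hy, hzxy⟩⟩
    · exact ⟨1, 1, 0, 0, fun h => absurd h hz⟩
  choose kk ll xx yy hkl using hchoose
  refine ⟨(2*m+1) * N + 2 * t.card^2 + 1, ?_⟩
  intro D hD 𝔥
  intro LD dh h𝔥LD hclosed hκfin
  obtain ⟨nκ, hnκ⟩ := Cardinal.lt_aleph0.mp hκfin
  -- ranges of the φD maps lie in LD
  have hrangeLD : ∀ (k : ℕ), 1 ≤ k → ∀ x ∈ gr ((k : ℕ) : ZMod m),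
      LinearMap.range (φD m k x D) ≤ LD := by
    rintro k hk x hx _ ⟨a, rfl⟩
    intro j _
    exact φP_mem_span m k hk gr x hx (a j)
  -- the comap subalgebra coefficient spaces
  have hH : ∀ (k : ℕ), 1 ≤ k → ∀ x ∈ gr ((k : ℕ) : ZMod m),
      cd 𝔉 (𝔥.comap (φD m k x D)) ≤ (nκ : Cardinal) := by
    intro k hk x hx
    exact cd_comap_le_nat (φD m k x D) 𝔥 LD (hrangeLD k hk x hx) nκ (le_of_eq hnκ)
  -- the product spaces
  set Wz : g → Submodule 𝔉 (Fin D → Polynomial 𝔉) := fun z =>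
    (𝔥.comap (φD m (kk z) (xx z) D)) * (𝔥.comap (φD m (ll z) (yy z) D)) with hWz
  have hWzcd : ∀ z ∈ t, cd 𝔉 (Wz z) ≤ ((2*nκ + D : ℕ) : Cardinal) := by
    intro z hz
    obtain ⟨h1, h2, h3, h4, hx, hy, hzxy⟩ := hkl z hz
    have ha := hH (kk z) h1 (xx z) hx
    have hb := hH (ll z) h3 (yy z) hy
    have := cd_mul_le_pi D _ _
      (lt_of_le_of_lt ha (Cardinal.nat_lt_aleph0 nκ))
      (lt_of_le_of_lt hb (Cardinal.nat_lt_aleph0 nκ))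
    refine this.trans ?_
    push_cast [two_mul]
    exact add_le_add (add_le_add ha hb) le_rfl
  set W := t.inf Wz with hW
  have hWcd : cd 𝔉 W ≤ ((t.card * (2*nκ + D) : ℕ) : Cardinal) := by
    refine (cd_finsetInf t Wz).trans ?_
    calc (t.sum fun z => cd 𝔉 (Wz z)) ≤ t.sum (fun _ => ((2*nκ + D : ℕ) : Cardinal)) :=
          Finset.sum_le_sum (fun z hz => hWzcd z hz)
      _ = ((t.card * (2*nκ + D) : ℕ) : Cardinal) := by
          rw [Finset.sum_const, nsmul_eq_mul]
          push_cast
          ring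
  
  obtain ⟨SW, hSWsup, hSWrank⟩ := exists_compl_rank W
  have hSWrank' : Module.rank 𝔉 SW ≤ ((t.card * (2*nκ + D) : ℕ) : Cardinal) :=
    le_of_eq hSWrank |>.trans hWcd
  -- products of elements of 𝔥 map into dh
  have hWdh : ∀ z ∈ t, W.map (φD m (kk z + ll z) z D) ≤ dh := by
    intro z hz
    obtain ⟨h1, h2, h3, h4, hx, hy, hzxy⟩ := hkl z hz
    refine le_trans (Submodule.map_mono (Finset.inf_le hz)) ?_
    rw [Submodule.map_le_iff_le_comap, hWz]
    rw [Submodule.mul_le]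
    intro u hu v hv
    rw [Submodule.mem_comap] at hu hv ⊢
    have heq : φD m (kk z + ll z) z D (u * v) =
        fun i => ⁅φD m (kk z) (xx z) D u i, φD m (ll z) (yy z) D v i⁆ := by
      funext i
      rw [φD_apply, φD_apply, φD_apply, φP_bracket, ← hzxy]
      rfl
    rw [heq]
    exact Submodule.subset_span ⟨_, hu, _, hv, rfl⟩
  -- the low-degree part
  set ξ : ℕ → Fin D → (g →ₗ[𝔉] (Fin D → Polynomial 𝔉 ⊗[𝔉] g)) := fun i j =>
    (LinearMap.single 𝔉 (fun _ : Fin D => Polynomial 𝔉 ⊗[𝔉] g) j) ∘ₗ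
      (TensorProduct.mk 𝔉 (Polynomial 𝔉) g (Polynomial.X ^ i)) with hξ
  set Low := (Finset.range (2*m+1) ×ˢ (Finset.univ : Finset (Fin D))).sup
    (fun q => LinearMap.range (ξ q.1 q.2)) with hLow
  have hLowrank : Module.rank 𝔉 Low ≤ (((2*m+1) * D * N : ℕ) : Cardinal) := by
    refine (rank_finsetSup_le _ _).trans ?_
    have hbound : ∀ q ∈ (Finset.range (2*m+1) ×ˢ (Finset.univ : Finset (Fin D))),
        Module.rank 𝔉 (LinearMap.range (ξ q.1 q.2)) ≤ ((N : ℕ) : Cardinal) := by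
      intro q _
      have : LinearMap.range (ξ q.1 q.2) = (⊤ : Submodule 𝔉 g).map (ξ q.1 q.2) := by
        rw [Submodule.map_top]
      rw [this]
      refine rank_map_le_nat _ _ N ?_
      rw [rank_top]
      exact le_of_eq (Module.finrank_eq_rank 𝔉 g).symm
    calc _ ≤ ((Finset.range (2*m+1) ×ˢ (Finset.univ : Finset (Fin D))).sum
          fun _ => ((N:ℕ) : Cardinal)) := Finset.sum_le_sum hbound
      _ = (((2*m+1) * D * N : ℕ) : Cardinal) := by
          rw [Finset.sum_const, nsmul_eq_mul, Finset.card_product, Finset.card_range,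
            Finset.card_univ, Fintype.card_fin]
          push_cast
          ring
  -- the high-degree error part
  set Big := t.sup (fun z => SW.map (φD m (kk z + ll z) z D)) with hBig
  have hBigrank : Module.rank 𝔉 Big ≤ ((t.card * (t.card * (2*nκ + D)) : ℕ) : Cardinal) := by
    refine (rank_finsetSup_le _ _).trans ?_
    have hbound : ∀ z ∈ t, Module.rank 𝔉 (SW.map (φD m (kk z + ll z) z D)) ≤
        ((t.card * (2*nκ + D) : ℕ) : Cardinal) :=
      fun z _ => rank_map_le_nat _ _ _ hSWrank'
    calc _ ≤ (t.sum fun _ => ((t.card * (2*nκ + D) : ℕ) : Cardinal)) := Finset.sum_le_sum hbound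
      _ = _ := by
          rw [Finset.sum_const, nsmul_eq_mul]
          push_cast
          ring
  
  -- THE COVERING: LD ≤ dh ⊔ (Low ⊔ Big)
  have hcover : LD ≤ dh ⊔ (Low ⊔ Big) := by
    rw [show LD = Submodule.pi Set.univ (fun _ : Fin D => 𝔏) from rfl,
      ← Submodule.iSup_map_single]
    apply iSup_le
    intro j
    rw [show 𝔏 = Submodule.span 𝔉 {z : Polynomial 𝔉 ⊗[𝔉] g |
        ∃ i : ℕ, 1 ≤ i ∧ ∃ x ∈ gr (i : ZMod m), z = (Polynomial.X ^ i) ⊗ₜ[𝔉] x} from rfl,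
      Submodule.map_span, Submodule.span_le]
    rintro w ⟨z0, ⟨i, hi1, x, hx, rfl⟩, rfl⟩
    rw [SetLike.mem_coe]
    by_cases hi2m : i ≤ 2*m
    · -- low degree: lands in Low
      apply Submodule.mem_sup_right
      apply Submodule.mem_sup_left
      have hmemLow : LinearMap.range (ξ i j) ≤ Low := by
        apply Finset.le_sup (f := fun q => LinearMap.range (ξ q.1 q.2)) (b := (i, j))
        rw [Finset.mem_product, Finset.mem_range]
        exact ⟨by omega, Finset.mem_univ j⟩
      exact hmemLow ⟨x, rfl⟩
    · -- high degree
      push_neg at hi2m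
      set c : ZMod m := ((i : ℕ) : ZMod m) with hc
      set tc := t.filter (fun z' => ((kk z' + ll z' : ℕ) : ZMod m) = c) with htc
      -- span of the subfamily of residue c covers gr c
      have hgrc_le : gr c ≤ Submodule.span 𝔉 (↑tc : Set g) := by
        have hsplit : (tc : Set g) ∪ ↑(t \ tc) = ↑t := by
          rw [← Finset.coe_union, Finset.union_sdiff_of_subset (Finset.filter_subset _ t)]
        have h1 : Submodule.span 𝔉 (↑t : Set g) =
            Submodule.span 𝔉 (↑tc : Set g) ⊔ Submodule.span 𝔉 (↑(t \ tc) : Set g) := by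
          rw [← Submodule.span_union, hsplit]
        have h2 : Submodule.span 𝔉 (↑tc : Set g) ≤ gr c := by
          rw [Submodule.span_le]
          intro z' hz'
          rw [Finset.mem_coe, Finset.mem_filter] at hz'
          obtain ⟨hz't, hz'c⟩ := hz'
          obtain ⟨h1', h2', h3', h4', hx', hy', hzxy'⟩ := hkl z' hz't
          rw [SetLike.mem_coe, ← hz'c]
          have := hbr _ _ _ hx' _ hy'
          rw [← Nat.cast_add] at this
          rw [← hzxy'] at this
          exact this
        have h3 : Submodule.span 𝔉 (↑(t \ tc) : Set g) ≤ ⨆ j' ≠ c, gr j' := by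
          rw [Submodule.span_le]
          intro z' hz'
          rw [Finset.mem_coe, Finset.mem_sdiff] at hz'
          obtain ⟨hz't, hz'nc⟩ := hz'
          rw [Finset.mem_filter] at hz'nc
          have hnc : ((kk z' + ll z' : ℕ) : ZMod m) ≠ c := fun h => hz'nc ⟨hz't, h⟩
          obtain ⟨h1', h2', h3', h4', hx', hy', hzxy'⟩ := hkl z' hz't
          have hz'mem : z' ∈ gr ((kk z' + ll z' : ℕ) : ZMod m) := by
            have := hbr _ _ _ hx' _ hy'
            rw [← Nat.cast_add] at this
            rw [← hzxy'] at this
            exact this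
          exact SetLike.mem_coe.mpr
            (Submodule.mem_iSup_of_mem _ (Submodule.mem_iSup_of_mem hnc hz'mem))
        have h4 : Disjoint (gr c) (⨆ j' ≠ c, gr j') := hdec.submodule_iSupIndep c
        have h5 : gr c ⊓ Submodule.span 𝔉 (↑(t \ tc) : Set g) = ⊥ := by
          rw [← le_bot_iff]
          calc gr c ⊓ Submodule.span 𝔉 (↑(t \ tc) : Set g)
              ≤ gr c ⊓ (⨆ j' ≠ c, gr j') := inf_le_inf le_rfl h3
            _ = ⊥ := h4.eq_bot
        have hgoal : gr c = gr c ⊓ (Submodule.span 𝔉 (↑(t \ tc) : Set g) ⊔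
            Submodule.span 𝔉 (↑tc : Set g)) := by
          rw [sup_comm, ← h1, ht_span, inf_top_eq]
        rw [← inf_sup_assoc_of_le _ h2, h5, bot_sup_eq] at hgoal
        exact le_of_eq hgoal
      -- each member of tc lands in dh ⊔ Big at degree i
      have hmem_tc : ∀ z' ∈ tc, ξ i j z' ∈ dh ⊔ (Low ⊔ Big) := by
        intro z' hz'
        rw [Finset.mem_filter] at hz'
        obtain ⟨hz't, hz'c⟩ := hz'
        obtain ⟨h1', h2', h3', h4', hx', hy', hzxy'⟩ := hkl z' hz't
        have hle : kk z' + ll z' ≤ i := by omega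
        have hdvd : m ∣ i - (kk z' + ll z') :=
          (Nat.modEq_iff_dvd' hle).mp ((ZMod.natCast_eq_natCast_iff _ _ _).mp hz'c)
        obtain ⟨r, hr⟩ := hdvd
        have hieq : i = (kk z' + ll z') + m * r := by omega
        have hθ : ξ i j z' = φD m (kk z' + ll z') z' D (Pi.single j (Polynomial.X ^ r)) := by
          rw [φD_single]
          have : φP m (kk z' + ll z') z' (Polynomial.X ^ r) =
              (Polynomial.X ^ i : Polynomial 𝔉) ⊗ₜ[𝔉] z' := by
            rw [φP_apply, εP_apply, map_pow, Polynomial.aeval_X, ← pow_mul, ← pow_add, ← hieq]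
          rw [this]
          rfl
        rw [hθ]
        have hsplit2 : Pi.single j (Polynomial.X ^ r : Polynomial 𝔉) ∈ W ⊔ SW := by
          rw [hSWsup]; trivial
        obtain ⟨w1, hw1, s1, hs1, hws⟩ := Submodule.mem_sup.mp hsplit2
        rw [← hws, map_add]
        apply Submodule.add_mem
        · exact Submodule.mem_sup_left (hWdh z' hz't (Submodule.mem_map_of_mem hw1))
        · apply Submodule.mem_sup_right
          apply Submodule.mem_sup_right
          have : SW.map (φD m (kk z' + ll z') z' D) ≤ Big :=
            Finset.le_sup (f := fun z'' => SW.map (φD m (kk z'' + ll z'') z'' D)) hz't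
          exact this (Submodule.mem_map_of_mem hs1)
      -- conclude via linearity in x
      have hxc : x ∈ gr c := hx
      have := hgrc_le hxc
      have hcomap : Submodule.span 𝔉 (↑tc : Set g) ≤ (dh ⊔ (Low ⊔ Big)).comap (ξ i j) := by
        rw [Submodule.span_le]
        intro z' hz'
        rw [SetLike.mem_coe, Submodule.mem_comap]
        exact hmem_tc z' (Finset.mem_coe.mp hz')
      have := hcomap this
      rw [Submodule.mem_comap] at this
      have hfinal : (LinearMap.single 𝔉 (fun _ : Fin D => Polynomial 𝔉 ⊗[𝔉] g) j)
          ((Polynomial.X ^ i : Polynomial 𝔉) ⊗ₜ[𝔉] x) = ξ i j x := rfl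
      rw [hfinal]
      exact this
  -- FINALE: rank computation
  have hmapr : LD.map dh.mkQ ≤ (Low ⊔ Big).map dh.mkQ := by
    refine le_trans (Submodule.map_mono hcover) ?_
    rw [Submodule.map_sup]
    have : dh.map dh.mkQ = ⊥ := by
      ext q
      simp only [Submodule.mem_map, Submodule.mem_bot]
      constructor
      · rintro ⟨y, hy, rfl⟩
        simpa [Submodule.Quotient.mk_eq_zero] using hy
      · rintro rfl
        exact ⟨0, dh.zero_mem, map_zero _⟩
    rw [this, bot_sup_eq]
  have hstep : Module.rank 𝔉 (LD.map dh.mkQ) ≤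
      (((2*m+1) * D * N + t.card * (t.card * (2*nκ + D)) : ℕ) : Cardinal) := by
    calc Module.rank 𝔉 (LD.map dh.mkQ) ≤ Module.rank 𝔉 ((Low ⊔ Big).map dh.mkQ) :=
          Submodule.rank_mono hmapr
      _ ≤ Module.rank 𝔉 ((Low ⊔ Big : Submodule 𝔉 _)) := rank_map_le _ _
      _ ≤ Module.rank 𝔉 Low + Module.rank 𝔉 Big := rank_sup_le _ _
      _ ≤ _ := by
          refine le_trans (add_le_add hLowrank hBigrank) ?_
          push_cast
          exact le_rfl
  refine hstep.trans ?_
  rw [hnκ]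
  have harith : ((2*m+1) * D * N + t.card * (t.card * (2*nκ + D)) : ℕ) ≤
      ((2*m+1) * N + 2 * t.card^2 + 1) * (nκ + D) := by
    have h1 : t.card * (t.card * (2*nκ + D)) = 2*(t.card^2)*nκ + (t.card^2)*D := by ring
    rw [h1]
    have h2 : ((2*m+1) * N + 2 * t.card^2 + 1) * (nκ + D) =
        ((2*m+1) * D * N + (2*(t.card^2)*nκ + (t.card^2)*D)) +
          ((2*m+1)*N*nκ + nκ + (t.card^2)*D + D) := by ring
    rw [h2]
    exact Nat.le_add_right _ _
  calc (((2*m+1) * D * N + t.card * (t.card * (2*nκ + D)) : ℕ) : Cardinal)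
      ≤ ((((2*m+1) * N + 2 * t.card^2 + 1) * (nκ + D) : ℕ) : Cardinal) := by
        exact_mod_cast Nat.cast_le.mpr harith
    _ = (((2*m+1) * N + 2 * t.card^2 + 1 : ℕ) : Cardinal) * ((nκ : Cardinal) + (D : Cardinal)) := by
        push_cast
        ring
end

section
/- Let 𝔤 be a Lie algebra over a field F, and let 𝔤₀ and 𝔤₁ be F-subspaces of 𝔤 such that 𝔤₁ is finite-dimensional of dimension d and the subspace B = span_F{⁅x,y⁆ : x ∈ 𝔤₀, y ∈ 𝔤₁} is finite-dimensional. Let D be a natural number, and let U be a subspace of 𝔤₀^D of finite codimension in 𝔤₀^D and V a subspace of 𝔤₁^D of finite codimension in 𝔤₁^D. Let [U,V] = span_F{⁅u,v⁆ : u ∈ U, v ∈ V}, computed componentwise in 𝔤^D; then [U,V] ⊆ B^D and codim_{B^D}[U,V] ≤ d · codim_{𝔤₀^D}U + (dim_F B) · codim_{𝔤₁^D}V. -/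
open Submodule

section Aux

variable {F : Type*} [Field F] {M : Type*} [AddCommGroup M] [Module F M]

/-- Complement extraction: a finite-codimension submodule has a finite "complement" family. -/
lemma aux_exists_compl (N : Submodule F M) [Module.Finite F (M ⧸ N)] :
    ∃ ξ : Fin (Module.finrank F (M ⧸ N)) → M,
      ∀ x : M, ∃ t : Fin (Module.finrank F (M ⧸ N)) → F,
        x - ∑ j, t j • ξ j ∈ N := by
  classical
  set n := Module.finrank F (M ⧸ N) with hn
  let b : Module.Basis (Fin n) F (M ⧸ N) := Module.finBasis F (M ⧸ N)
  choose ξ hξ using fun j => N.mkQ_surjective (b j)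
  refine ⟨ξ, fun x => ⟨fun j => b.repr (N.mkQ x) j, ?_⟩⟩
  have h : N.mkQ (x - ∑ j, b.repr (N.mkQ x) j • ξ j) = 0 := by
    rw [map_sub, map_sum]
    simp_rw [map_smul, hξ]
    rw [b.sum_repr (N.mkQ x), sub_self]
  rwa [← LinearMap.mem_ker, Submodule.ker_mkQ] at h

/-- Counting jumps in a monotone chain of submodules of a finite-dimensional space. -/
lemma aux_jumps {Q : Type*} [AddCommGroup Q] [Module F Q] [FiniteDimensional F Q]
    (C : ℕ → Submodule F Q) [DecidablePred fun k => C k ≠ C (k + 1)]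
    (hmono : Monotone C) (m : ℕ) :
    ((Finset.range m).filter (fun k => C k ≠ C (k + 1))).card
      ≤ Module.finrank F ↥(C m) := by
  induction m with
  | zero => simp
  | succ m ih =>
    rw [Finset.range_add_one, Finset.filter_insert]
    by_cases h : C m ≠ C (m + 1)
    · rw [if_pos h]
      have hlt : C m < C (m + 1) := lt_of_le_of_ne (hmono (Nat.le_succ m)) h
      have h2 := Submodule.finrank_lt_finrank_of_lt (K := F) hlt
      have h3 := Finset.card_insert_le m ((Finset.range m).filter (fun k => C k ≠ C (k + 1)))
      omega
    · rw [if_neg h]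
      rw [not_not] at h
      rw [← h]
      exact ih

end Aux

section BrkMaps

variable (F : Type*) [Field F] {g : Type*} [LieRing g] [LieAlgebra F g]
  (g1 : Submodule F g) {D : ℕ}

/-- Bracketing on the right by elements of `g1`, with a fixed tuple on the left. -/
def brkMap (a : Fin D → g) : ↥g1 →ₗ[F] (Fin D → g) where
  toFun y := fun i => ⁅a i, (y : g)⁆
  map_add' y z := by funext i; simp [lie_add]
  map_smul' c y := by funext i; simp [lie_smul]

@[simp] lemma brkMap_apply (a : Fin D → g) (y : ↥g1) (i : Fin D) :
    brkMap F g1 a y i = ⁅a i, (y : g)⁆ := rfl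

/-- Bracketing tuples on the left with a fixed element on the right. -/
def brkL (y : g) : (Fin D → g) →ₗ[F] (Fin D → g) where
  toFun w := fun i => ⁅w i, y⁆
  map_add' w z := by funext i; simp [add_lie]
  map_smul' c w := by funext i; simp [smul_lie]

@[simp] lemma brkL_apply (y : g) (w : Fin D → g) (i : Fin D) :
    brkL F y w i = ⁅w i, y⁆ := rfl

end BrkMaps

set_option maxHeartbeats 1000000 in
/-- Let `𝔤` be a Lie algebra over a field `F`, `𝔤₀, 𝔤₁ ≤ 𝔤` subspaces with `𝔤₁`
finite-dimensional and `B = span {⁅x, y⁆ : x ∈ 𝔤₀, y ∈ 𝔤₁}` finite-dimensional.  For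
subspaces `U ≤ 𝔤₀ᴰ` and `V ≤ 𝔤₁ᴰ` of finite codimension, the span `[U, V]` of componentwise
brackets satisfies `[U, V] ≤ Bᴰ` and
`codim_{Bᴰ} [U, V] ≤ (dim 𝔤₁) · codim_{𝔤₀ᴰ} U + (dim B) · codim_{𝔤₁ᴰ} V`. -/
theorem stmt_1 (F : Type*) [Field F] (g : Type*) [LieRing g] [LieAlgebra F g]
    (g0 g1 : Submodule F g)
    (hg1fin : Module.rank F ↥g1 < Cardinal.aleph0)
    (D : ℕ) (U V : Submodule F (Fin D → g)) :
    let B : Submodule F g := Submodule.span F {z : g | ∃ x ∈ g0, ∃ y ∈ g1, z = ⁅x, y⁆}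
    let g0D : Submodule F (Fin D → g) := Submodule.pi Set.univ fun _ => g0
    let g1D : Submodule F (Fin D → g) := Submodule.pi Set.univ fun _ => g1
    let BD : Submodule F (Fin D → g) := Submodule.pi Set.univ fun _ => B
    let UV : Submodule F (Fin D → g) :=
      Submodule.span F {z : Fin D → g | ∃ u ∈ U, ∃ v ∈ V, z = fun i => ⁅u i, v i⁆}
    Module.rank F ↥B < Cardinal.aleph0 →
    U ≤ g0D → V ≤ g1D →
    Module.rank F (↥g0D ⧸ U.comap g0D.subtype) < Cardinal.aleph0 →
    Module.rank F (↥g1D ⧸ V.comap g1D.subtype) < Cardinal.aleph0 →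
    UV ≤ BD ∧
      Module.rank F (↥BD ⧸ UV.comap BD.subtype) ≤
        Module.rank F ↥g1 * Module.rank F (↥g0D ⧸ U.comap g0D.subtype) +
          Module.rank F ↥B * Module.rank F (↥g1D ⧸ V.comap g1D.subtype) := by
  intro B g0D g1D BD UV hBfin hU0 hV1 hcU hcV
  classical
  haveI hfin1 : Module.Finite F ↥g1 :=
    IsNoetherian.iff_fg.mp (IsNoetherian.iff_rank_lt_aleph0.mpr hg1fin)
  haveI hfinB : Module.Finite F ↥B :=
    IsNoetherian.iff_fg.mp (IsNoetherian.iff_rank_lt_aleph0.mpr hBfin)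
  haveI hfinQU : Module.Finite F (↥g0D ⧸ U.comap g0D.subtype) :=
    IsNoetherian.iff_fg.mp (IsNoetherian.iff_rank_lt_aleph0.mpr hcU)
  haveI hfinQV : Module.Finite F (↥g1D ⧸ V.comap g1D.subtype) :=
    IsNoetherian.iff_fg.mp (IsNoetherian.iff_rank_lt_aleph0.mpr hcV)
  -- first conclusion
  have hUVBD : UV ≤ BD := by
    rw [Submodule.span_le]
    rintro z ⟨u, hu, v, hv, rfl⟩
    intro i _
    exact Submodule.subset_span ⟨u i, hU0 hu i (Set.mem_univ i), v i, hV1 hv i (Set.mem_univ i), rfl⟩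
  refine ⟨hUVBD, ?_⟩
  -- abbreviations for dimensions
  set c := Module.finrank F (↥g0D ⧸ U.comap g0D.subtype) with hc
  set e := Module.finrank F (↥g1D ⧸ V.comap g1D.subtype) with he
  set d := Module.finrank F ↥g1 with hd
  set b := Module.finrank F ↥B with hb
  -- complement of U
  obtain ⟨ξ, hξ⟩ := aux_exists_compl (U.comap g0D.subtype)
  -- the chain W
  set G : ℕ → Submodule F (Fin D → g) := fun m =>
    ⨆ (i : Fin D) (_ : (i : ℕ) < m), Submodule.map (LinearMap.single F (fun _ => g) i) g1
    with hG
  set W : ℕ → Submodule F (Fin D → g) := fun m => V ⊔ G m with hW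
  have hGmono : Monotone G := by
    intro a a' haa'
    simp only [hG]
    exact iSup_mono fun i => iSup_le fun hi => le_iSup_of_le (lt_of_lt_of_le hi haa') le_rfl
  have hWmono : Monotone W := fun a a' haa' => sup_le_sup_left (hGmono haa') _
  have hG0 : G 0 = ⊥ := by
    simp only [hG]
    simp
  have hW0 : W 0 = V := by
    simp only [hW, hG0, sup_bot_eq]
  have hGsucc : ∀ (m : ℕ) (hm : m < D),
      G (m + 1) = G m ⊔ Submodule.map (LinearMap.single F (fun _ => g) (⟨m, hm⟩ : Fin D)) g1 := by
    intro m hm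
    simp only [hG]
    apply le_antisymm
    · refine iSup_le fun i => iSup_le fun hi => ?_
      rcases Nat.lt_succ_iff_lt_or_eq.mp hi with h | h
      · exact le_sup_of_le_left (le_iSup_of_le i (le_iSup_of_le h le_rfl))
      · have hik : i = (⟨m, hm⟩ : Fin D) := Fin.ext h
        subst hik
        exact le_sup_right
    · refine sup_le ?_ ?_
      · exact iSup_mono fun i => iSup_le fun hi => le_iSup_of_le (Nat.lt_succ_of_lt hi) le_rfl
      · exact le_iSup_of_le (⟨m, hm⟩ : Fin D) (le_iSup_of_le (Nat.lt_succ_self m) le_rfl)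
  have hWsucc : ∀ (m : ℕ) (hm : m < D),
      W (m + 1) = W m ⊔ Submodule.map (LinearMap.single F (fun _ => g) (⟨m, hm⟩ : Fin D)) g1 := by
    intro m hm
    simp only [hW]
    rw [hGsucc m hm, sup_assoc]
  have hWD : g1D ≤ W D := by
    intro y hy
    have hy' : ∀ i, y i ∈ g1 := fun i => hy i (Set.mem_univ i)
    rw [← Finset.univ_sum_single y]
    refine Submodule.sum_mem _ fun i _ => ?_
    refine Submodule.mem_sup_right ?_
    have hmem : Pi.single i (y i) ∈ Submodule.map (LinearMap.single F (fun _ => g) i) g1 :=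
      ⟨y i, hy' i, rfl⟩
    have hle : Submodule.map (LinearMap.single F (fun _ => g) i) g1 ≤ G D := by
      simp only [hG]
      exact le_iSup_of_le i (le_iSup_of_le i.isLt le_rfl)
    exact hle hmem
  -- the exceptional finset K
  set K : Finset (Fin D) := Finset.univ.filter
    (fun k => ¬ Submodule.map (LinearMap.single F (fun _ => g) k) g1 ≤ W (k : ℕ)) with hK
  -- the linear maps
  set Φ : (Fin c → ↥g1) →ₗ[F] (Fin D → g) :=
    ∑ j : Fin c, (brkMap F g1 ((ξ j : Fin D → g))).comp (LinearMap.proj j) with hΦ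
  set Ψ : ({k // k ∈ K} → ↥B) →ₗ[F] (Fin D → g) :=
    ∑ k : {k // k ∈ K},
      ((LinearMap.single F (fun _ => g) (k : Fin D)).comp B.subtype).comp (LinearMap.proj k)
    with hΨ
  have hΦapp : ∀ t : Fin c → ↥g1,
      Φ t = ∑ j : Fin c, (fun i => ⁅(ξ j : Fin D → g) i, (t j : g)⁆) := by
    intro t
    rw [hΦ, LinearMap.sum_apply]
    rfl
  have hΨapp : ∀ s : {k // k ∈ K} → ↥B,
      Ψ s = ∑ k : {k // k ∈ K}, Pi.single (k : Fin D) ((s k : g)) := by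
    intro s
    rw [hΨ, LinearMap.sum_apply]
    rfl
  set SΦ : Submodule F (Fin D → g) := LinearMap.range Φ with hSΦ
  set SΨ : Submodule F (Fin D → g) := LinearMap.range Ψ with hSΨ
  -- Ψ hits single elements
  have hΨsingle : ∀ (k : Fin D) (hk : k ∈ K) (bb : ↥B),
      Pi.single k (bb : g) ∈ SΨ := by
    intro k hk bb
    refine ⟨Pi.single (⟨k, hk⟩ : {k // k ∈ K}) bb, ?_⟩
    rw [hΨapp]
    rw [Finset.sum_eq_single_of_mem (⟨k, hk⟩ : {k // k ∈ K}) (Finset.mem_univ _)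
      (fun k' _ hne => by rw [Pi.single_eq_of_ne hne]; simp)]
    simp
  -- Φ hits brackets with ξ j
  have hΦξ : ∀ (t : Fin c → F) (y : g) (hy : y ∈ g1),
      (∑ j : Fin c, t j • (fun i => ⁅(ξ j : Fin D → g) i, y⁆ : Fin D → g)) ∈ SΦ := by
    intro t y hy
    refine ⟨fun j => t j • (⟨y, hy⟩ : ↥g1), ?_⟩
    rw [hΦapp]
    congr 1
    funext j
    funext i
    simp [lie_smul]
  -- membership of U-elements' components in g0
  have hUg0 : ∀ u, u ∈ U → ∀ i, u i ∈ g0 := fun u hu i => hU0 hu i (Set.mem_univ i)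
  -- the main bracket induction
  have hbrk : ∀ m, m ≤ D → ∀ u, u ∈ U → ∀ w, w ∈ W m →
      (fun i => ⁅u i, w i⁆) ∈ UV ⊔ SΨ := by
    intro m
    induction m with
    | zero =>
      intro _ u hu w hw
      rw [hW0] at hw
      exact Submodule.mem_sup_left (Submodule.subset_span ⟨u, hu, w, hw, rfl⟩)
    | succ m ih =>
      intro hm u hu w hw
      have hmD : m < D := Nat.lt_of_succ_le hm
      rw [hWsucc m hmD] at hw
      by_cases hk : (⟨m, hmD⟩ : Fin D) ∈ K
      · obtain ⟨w₁, hw₁, w₂, hw₂, rfl⟩ := Submodule.mem_sup.mp hw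
        obtain ⟨z, hz, rfl⟩ := hw₂
        have hsplit : (fun i => ⁅u i, (w₁ + (LinearMap.single F (fun _ => g) (⟨m, hmD⟩ : Fin D)) z) i⁆)
            = (fun i => ⁅u i, w₁ i⁆) + Pi.single (⟨m, hmD⟩ : Fin D) ⁅u (⟨m, hmD⟩ : Fin D), z⁆ := by
          funext i
          simp only [Pi.add_apply, LinearMap.coe_single, lie_add]
          congr 1
          exact @Pi.apply_single (Fin D) (fun _ => g) (fun _ => g) _ _ _
            (fun j w => ⁅u j, w⁆) (fun j => lie_zero _) (⟨m, hmD⟩ : Fin D) z i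
        rw [hsplit]
        refine Submodule.add_mem _ (ih (Nat.le_of_lt hm) u hu w₁ hw₁) ?_
        have hBmem : ⁅u (⟨m, hmD⟩ : Fin D), z⁆ ∈ B :=
          Submodule.subset_span ⟨u _, hUg0 u hu _, z, hz, rfl⟩
        exact Submodule.mem_sup_right (hΨsingle _ hk ⟨_, hBmem⟩)
      · have hle : Submodule.map (LinearMap.single F (fun _ => g) (⟨m, hmD⟩ : Fin D)) g1
            ≤ W m := by
          by_contra hno
          exact hk (by simp [hK, Finset.mem_filter, hno])
        have hw' : w ∈ W m := by
          rcases Submodule.mem_sup.mp hw with ⟨w₁, hw₁, w₂, hw₂, rfl⟩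
          exact Submodule.add_mem _ hw₁ (hle hw₂)
        exact ih (Nat.le_of_lt hm) u hu w hw'
  -- the key generation step
  have h1 : ∀ (k : Fin D) (x : g), x ∈ g0 → ∀ y : g, y ∈ g1 →
      Pi.single k ⁅x, y⁆ ∈ UV ⊔ (SΦ ⊔ SΨ) := by
    intro k x hx y hy
    have hxs : Pi.single k x ∈ g0D := by
      intro i _
      rcases eq_or_ne i k with h | h
      · subst h; rw [Pi.single_eq_same]; exact hx
      · rw [Pi.single_eq_of_ne h]; exact Submodule.zero_mem g0
    obtain ⟨t, ht⟩ := hξ ⟨Pi.single k x, hxs⟩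
    set us : ↥g0D := (⟨Pi.single k x, hxs⟩ : ↥g0D) - ∑ j, t j • ξ j with hus
    have huU : (us : Fin D → g) ∈ U := ht
    have hcoe : (us : Fin D → g) = Pi.single k x - ∑ j, t j • (ξ j : Fin D → g) := by
      show g0D.subtype us = _
      rw [hus, map_sub, map_sum]
      simp only [map_smul]
      rfl
    -- decompose the single bracket
    have hkey : Pi.single k ⁅x, y⁆
        = (fun i => ⁅(us : Fin D → g) i, y⁆)
          + ∑ j, t j • (fun i => ⁅(ξ j : Fin D → g) i, y⁆ : Fin D → g) := by
      have h2 : Pi.single k ⁅x, y⁆ = brkL F y (Pi.single k x) := by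
        funext i
        rw [brkL_apply]
        exact (@Pi.apply_single (Fin D) (fun _ => g) (fun _ => g) _ _ _
          (fun _ w => ⁅w, y⁆) (fun _ => zero_lie _) k x i).symm
      have h3 : (Pi.single k x : Fin D → g)
          = (us : Fin D → g) + ∑ j, t j • (ξ j : Fin D → g) := by
        rw [hcoe, sub_add_cancel]
      rw [h2, h3, map_add, map_sum]
      refine congrArg₂ (· + ·) rfl (Finset.sum_congr rfl fun j _ => ?_)
      rw [map_smul]
      rfl
    rw [hkey]
    refine Submodule.add_mem _ ?_ ?_
    · -- bracket of us with the constant tuple y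
      have hΔ : (fun _ : Fin D => y) ∈ g1D := fun i _ => hy
      have hmem := hbrk D le_rfl _ huU (fun _ => y) (hWD hΔ)
      exact (sup_le_sup_left le_sup_right UV) hmem
    · exact Submodule.mem_sup_right (Submodule.mem_sup_left (hΦξ t y hy))
  -- main generation: BD is covered
  have h2 : BD ≤ UV ⊔ (SΦ ⊔ SΨ) := by
    intro z hz
    have hz' : ∀ i, z i ∈ B := fun i => hz i (Set.mem_univ i)
    rw [← Finset.univ_sum_single z]
    refine Submodule.sum_mem _ fun i _ => ?_
    have hBle : B ≤ (UV ⊔ (SΦ ⊔ SΨ)).comap (LinearMap.single F (fun _ => g) i) := by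
      rw [Submodule.span_le]
      rintro bb ⟨x, hx, y, hy, rfl⟩
      exact h1 i x hx y hy
    exact hBle (hz' i)
  -- ranges are inside BD
  have hSΦBD : SΦ ≤ BD := by
    rintro w ⟨t, rfl⟩
    intro i _
    rw [hΦapp, Finset.sum_apply]
    refine Submodule.sum_mem _ fun j _ => ?_
    exact Submodule.subset_span ⟨(ξ j : Fin D → g) i, (ξ j).2 i (Set.mem_univ i),
      (t j : g), (t j).2, rfl⟩
  have hSΨBD : SΨ ≤ BD := by
    rintro w ⟨s, rfl⟩
    intro i _
    rw [hΨapp, Finset.sum_apply]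
    refine Submodule.sum_mem _ fun k _ => ?_
    rcases eq_or_ne i (k : Fin D) with h | h
    · rw [h, Pi.single_eq_same]; exact (s k).2
    · rw [Pi.single_eq_of_ne h]; exact Submodule.zero_mem B
  -- the quotient-surjection
  set X : Submodule F ↥BD := UV.comap BD.subtype with hX
  set Λ₀ : ((Fin c → ↥g1) × ({k // k ∈ K} → ↥B)) →ₗ[F] (Fin D → g) :=
    Φ.comp (LinearMap.fst F _ _) + Ψ.comp (LinearMap.snd F _ _) with hΛ₀
  have hΛ : ∀ p, Λ₀ p ∈ BD := by
    intro p
    have hp : Λ₀ p = Φ p.1 + Ψ p.2 := rfl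
    rw [hp]
    exact Submodule.add_mem _ (hSΦBD ⟨p.1, rfl⟩) (hSΨBD ⟨p.2, rfl⟩)
  set Θ : ((Fin c → ↥g1) × ({k // k ∈ K} → ↥B)) →ₗ[F] (↥BD ⧸ X) :=
    X.mkQ.comp (LinearMap.codRestrict BD Λ₀ hΛ) with hΘ
  have hsurj : Function.Surjective Θ := by
    intro q
    obtain ⟨zz, rfl⟩ := X.mkQ_surjective q
    have hzz : (zz : Fin D → g) ∈ UV ⊔ (SΦ ⊔ SΨ) := h2 zz.2
    obtain ⟨a, ha, bc, hbc, heq⟩ := Submodule.mem_sup.mp hzz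
    obtain ⟨b1, hb1, b2, hb2, rfl⟩ := Submodule.mem_sup.mp hbc
    obtain ⟨t, rfl⟩ := hb1
    obtain ⟨s, rfl⟩ := hb2
    refine ⟨(t, s), ?_⟩
    have hval : Θ (t, s) = X.mkQ (LinearMap.codRestrict BD Λ₀ hΛ (t, s)) := rfl
    rw [hval, Submodule.mkQ_apply, Submodule.mkQ_apply, Submodule.Quotient.eq, hX,
      Submodule.mem_comap]
    have hcoe : BD.subtype ((LinearMap.codRestrict BD Λ₀ hΛ (t, s) - zz : ↥BD))
        = (Φ t + Ψ s) - (zz : Fin D → g) := rfl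
    rw [hcoe, ← heq]
    have habel : Φ t + Ψ s - (a + (Φ t + Ψ s)) = -a := by abel
    rw [habel]
    exact Submodule.neg_mem _ ha
  -- counting K
  have hKcard : K.card ≤ e := by
    set Cc : ℕ → Submodule F (↥g1D ⧸ V.comap g1D.subtype) := fun m =>
      ((W m).comap g1D.subtype).map (V.comap g1D.subtype).mkQ with hCc
    have hCmono : Monotone Cc := fun m m' h =>
      Submodule.map_mono (Submodule.comap_mono (hWmono h))
    have hjump : ∀ k ∈ K, Cc (k : ℕ) ≠ Cc ((k : ℕ) + 1) := by
      intro k hk hCeq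
      have hnot := (Finset.mem_filter.mp hk).2
      apply hnot
      rintro w ⟨z, hz, rfl⟩
      have hg1mem : (LinearMap.single F (fun _ => g) k) z ∈ g1D := by
        have hall : ∀ i, (Pi.single k z : Fin D → g) i ∈ g1 := by
          intro i
          rcases eq_or_ne i k with h | h
          · rw [h, Pi.single_eq_same]; exact hz
          · rw [Pi.single_eq_of_ne h]; exact Submodule.zero_mem g1
        exact fun i _ => hall i
      have hmem1 : (LinearMap.single F (fun _ => g) k) z ∈ W ((k : ℕ) + 1) := by
        refine Submodule.mem_sup_right ?_
        have hmm : (LinearMap.single F (fun _ => g) k) z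
            ∈ Submodule.map (LinearMap.single F (fun _ => g) k) g1 := ⟨z, hz, rfl⟩
        have hle : Submodule.map (LinearMap.single F (fun _ => g) k) g1 ≤ G ((k : ℕ) + 1) := by
          simp only [hG]
          exact le_iSup_of_le k (le_iSup_of_le (Nat.lt_succ_self _) le_rfl)
        exact hle hmm
      have hmemC : (V.comap g1D.subtype).mkQ ⟨_, hg1mem⟩ ∈ Cc ((k : ℕ) + 1) :=
        ⟨⟨_, hg1mem⟩, hmem1, rfl⟩
      rw [← hCeq] at hmemC
      obtain ⟨w', hw', hw'eq⟩ := hmemC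
      have hdiff : (⟨_, hg1mem⟩ : ↥g1D) - w' ∈ V.comap g1D.subtype := by
        rw [← Submodule.Quotient.eq]
        exact hw'eq.symm
      have hVW : ((⟨_, hg1mem⟩ : ↥g1D) : Fin D → g) - (w' : Fin D → g) ∈ W (k : ℕ) := by
        have hv : ((⟨_, hg1mem⟩ : ↥g1D) : Fin D → g) - (w' : Fin D → g) ∈ V := hdiff
        exact Submodule.mem_sup_left hv
      have hw'W : (w' : Fin D → g) ∈ W (k : ℕ) := hw'
      have hsum := Submodule.add_mem _ hVW hw'W
      rw [sub_add_cancel] at hsum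
      exact hsum
    have hcard1 : K.card ≤
        ((Finset.range D).filter (fun m => Cc m ≠ Cc (m + 1))).card := by
      refine Finset.card_le_card_of_injOn (fun k => (k : ℕ)) ?_ ?_
      · intro k hk
        rw [Finset.mem_coe, Finset.mem_filter, Finset.mem_range]
        exact ⟨k.isLt, hjump k hk⟩
      · exact Fin.val_injective.injOn
    calc K.card ≤ ((Finset.range D).filter (fun m => Cc m ≠ Cc (m + 1))).card := hcard1
      _ ≤ Module.finrank F ↥(Cc D) := aux_jumps Cc hCmono D
      _ ≤ Module.finrank F (↥g1D ⧸ V.comap g1D.subtype) := Submodule.finrank_le _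
      _ = e := rfl
  -- rank computation
  have hrank1 : Module.rank F (↥BD ⧸ X)
      ≤ Module.rank F ((Fin c → ↥g1) × ({k // k ∈ K} → ↥B)) :=
    Θ.rank_le_of_surjective hsurj
  have hfr1 : Module.finrank F ((Fin c → ↥g1) × ({k // k ∈ K} → ↥B))
      = c * d + K.card * b := by
    rw [Module.finrank_prod, Module.finrank_pi_fintype, Module.finrank_pi_fintype]
    simp [Finset.sum_const, Fintype.card_coe, mul_comm]
    rfl
  have hrank2 : Module.rank F ((Fin c → ↥g1) × ({k // k ∈ K} → ↥B))
      = ((c * d + K.card * b : ℕ) : Cardinal) := by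
    rw [← hfr1, Module.finrank_eq_rank]
  have hrhs : Module.rank F ↥g1 * Module.rank F (↥g0D ⧸ U.comap g0D.subtype) +
      Module.rank F ↥B * Module.rank F (↥g1D ⧸ V.comap g1D.subtype)
      = ((d * c + b * e : ℕ) : Cardinal) := by
    rw [← Module.finrank_eq_rank F ↥g1, ← Module.finrank_eq_rank F ↥B,
      ← Module.finrank_eq_rank F (↥g0D ⧸ U.comap g0D.subtype),
      ← Module.finrank_eq_rank F (↥g1D ⧸ V.comap g1D.subtype)]
    push_cast
    rfl
  rw [hrhs]
  refine hrank1.trans ?_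
  rw [hrank2, Nat.cast_le]
  exact Nat.add_le_add (Nat.le_of_eq (Nat.mul_comm c d))
    (le_trans (Nat.mul_le_mul_right b hKcard) (Nat.le_of_eq (Nat.mul_comm e b)))
end

section
/- Let P be a perfect group (i.e. P equals its commutator subgroup) and Q an arbitrary group. Let H be a subnormal subgroup of P × Q, i.e. there is a finite chain of subgroups H = N_s ⊴ N_{s−1} ⊴ ⋯ ⊴ N_1 ⊴ N_0 = P × Q in which each term is normal in the next one. If the projection of H to the first factor P is all of P, then P × {1} is contained in H. -/
open scoped commutatorElement

/-- Let `P` be a perfect group and `Q` an arbitrary group. If `H` is a subnormal subgroup of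
`P × Q` (witnessed by a finite chain `H = N s ⊴ ⋯ ⊴ N 0 = P × Q`) whose projection to the
first factor is all of `P`, then `P × {1}` is contained in `H`. -/
theorem stmt_2 (P Q : Type*) [Group P] [Group Q]
    (hP : commutator P = ⊤)
    (H : Subgroup (P × Q))
    (hsub : ∃ (s : ℕ) (N : ℕ → Subgroup (P × Q)),
      N 0 = ⊤ ∧ N s = H ∧
      ∀ i < s, N (i + 1) ≤ N i ∧
        ∀ g ∈ N i, ∀ x ∈ N (i + 1), g * x * g⁻¹ ∈ N (i + 1))
    (hproj : H.map (MonoidHom.fst P Q) = ⊤) :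
    ∀ p : P, ((p, 1) : P × Q) ∈ H := by
  obtain ⟨s, N, h0, hs, hchain⟩ := hsub
  -- H is contained in every term of the chain
  have hHle : ∀ k, k ≤ s → H ≤ N (s - k) := by
    intro k hk
    induction k with
    | zero => simp [hs]
    | succ k ih =>
      have hlt : s - (k + 1) < s := by omega
      have h1 : N (s - (k + 1) + 1) ≤ N (s - (k + 1)) := (hchain _ hlt).1
      have heq : s - (k + 1) + 1 = s - k := by omega
      rw [heq] at h1
      exact le_trans (ih (by omega)) h1
  -- main induction: P × 1 is contained in every term of the chain
  have main : ∀ i, i ≤ s → ∀ p : P, ((p, 1) : P × Q) ∈ N i := by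
    intro i
    induction i with
    | zero => intro _ p; rw [h0]; trivial
    | succ i ih =>
      intro hi p
      have hlt : i < s := by omega
      have ihi := ih (by omega)
      -- it suffices that the commutator subgroup maps into N (i+1)
      have key : commutator P ≤ (N (i + 1)).comap (MonoidHom.inl P Q) := by
        rw [commutator_def]
        rw [Subgroup.commutator_le]
        intro a _ b _
        -- find a preimage of b in H
        have hb : b ∈ H.map (MonoidHom.fst P Q) := by rw [hproj]; trivial
        obtain ⟨x, hxH, hxb⟩ := hb
        have hxN : x ∈ N (i + 1) := by
          have h := hHle (s - (i + 1)) (by omega)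
          rw [show s - (s - (i + 1)) = i + 1 by omega] at h
          exact h hxH
        have hconj : ((a, 1) : P × Q) * x * ((a, 1) : P × Q)⁻¹ ∈ N (i + 1) :=
          (hchain i hlt).2 _ (ihi a) _ hxN
        have hel : ((a, 1) : P × Q) * x * ((a, 1) : P × Q)⁻¹ * x⁻¹ ∈ N (i + 1) :=
          mul_mem hconj (inv_mem hxN)
        have heq : ((a, 1) : P × Q) * x * ((a, 1) : P × Q)⁻¹ * x⁻¹
            = ((⁅a, b⁆ : P), (1 : Q)) := by
          obtain ⟨x1, x2⟩ := x
          simp only [Prod.ext_iff] at hxb ⊢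
          subst hxb
          constructor
          · rfl
          · simp [Prod.snd_mul]
        rw [heq] at hel
        exact hel
      have : p ∈ commutator P := by rw [hP]; trivial
      exact key this
  have := main s le_rfl
  simpa [hs] using this
end

section
/- Let F be a field, M a finite-dimensional F-vector space of dimension d, D a natural number, and V a subspace of M^D (the space of D-tuples with entries in M) of finite codimension. Then there exist elements v₁, …, v_d ∈ V such that the number of indices i ∈ {1,…,D} for which the vectors v₁(i), …, v_d(i) do not span M is at most codim_{M^D} V. -/
set_option synthInstance.maxHeartbeats 1000000
set_option maxHeartbeats 1000000

open Module Submodule Set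

section Aux

variable (F : Type*) [Field F] (M : Type*) [AddCommGroup M] [Module F M]
    [FiniteDimensional F M] (D : ℕ)

/-- rank-nullity bookkeeping for dropping coordinate 0. -/
lemma aux_dim (V : Submodule F (Fin (D + 1) → M)) :
    Module.finrank F ((Fin D → M) ⧸ V.map (LinearMap.funLeft F M Fin.succ)) +
      (Module.finrank F M -
        Module.finrank F (V.comap (LinearMap.single F (fun _ : Fin (D + 1) => M) 0))) ≤
      Module.finrank F ((Fin (D + 1) → M) ⧸ V) := by
  set π : (Fin (D + 1) → M) →ₗ[F] (Fin D → M) := LinearMap.funLeft F M Fin.succ with hπ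
  set ι : M →ₗ[F] (Fin (D + 1) → M) := LinearMap.single F (fun _ : Fin (D + 1) => M) 0 with hι
  set W := V.map π
  set N := V.comap ι
  have h1 : Module.finrank F ((Fin (D + 1) → M) ⧸ V) + Module.finrank F V =
      Module.finrank F (Fin (D + 1) → M) := V.finrank_quotient_add_finrank
  have h2 : Module.finrank F ((Fin D → M) ⧸ W) + Module.finrank F W =
      Module.finrank F (Fin D → M) := W.finrank_quotient_add_finrank
  have h4 : Module.finrank F (Fin (D + 1) → M) =
      Module.finrank F (Fin D → M) + Module.finrank F M := by
    rw [Module.finrank_pi_fintype, Module.finrank_pi_fintype]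
    simp [Fin.sum_univ_succ]
    ring
  have h5 : Module.finrank F N ≤ Module.finrank F M := N.finrank_le
  -- rank-nullity for π restricted to V
  set ρ : V →ₗ[F] (Fin D → M) := π.comp V.subtype with hρ
  have hrange : LinearMap.range ρ = W := by
    rw [hρ, LinearMap.range_comp, Submodule.range_subtype]
  have hkerdim : Module.finrank F (LinearMap.ker ρ) = Module.finrank F N := by
    -- build equiv N ≃ₗ ker ρ
    have hmem : ∀ x ∈ N, ι x ∈ V := fun x hx => hx
    let g : N →ₗ[F] V := ι.restrict hmem
    have hg : ∀ n : N, (g n : Fin (D + 1) → M) = ι n := fun n => rfl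
    have hgker : ∀ n : N, g n ∈ LinearMap.ker ρ := by
      intro n
      rw [LinearMap.mem_ker]
      ext i
      simp [hρ, hπ, hg, hι, LinearMap.funLeft_apply, Pi.single_eq_of_ne (Fin.succ_ne_zero i)]
    let g' : N →ₗ[F] LinearMap.ker ρ := g.codRestrict _ hgker
    have hbij : Function.Bijective g' := by
      constructor
      · intro a b hab
        have : ι a = ι b := by
          have := congrArg (fun x : LinearMap.ker ρ => (x : Fin (D + 1) → M)) hab
          simpa [g', g] using this
        exact Subtype.ext (Pi.single_injective (M := fun _ : Fin (D + 1) => M) 0 this)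
      · rintro ⟨⟨x, hxV⟩, hxker⟩
        have hxker' : π x = 0 := by
          simpa [hρ, LinearMap.mem_ker] using hxker
        have hxs : x = ι (x 0) := by
          ext i
          refine Fin.cases ?_ ?_ i
          · simp [hι]
          · intro k
            have : π x k = 0 := by rw [hxker']; rfl
            simp only [hπ, LinearMap.funLeft_apply] at this
            simp [hι, Pi.single_eq_of_ne (Fin.succ_ne_zero k), this]
        have hx0 : x 0 ∈ N := by
          show ι (x 0) ∈ V
          rw [← hxs]; exact hxV
        refine ⟨⟨x 0, hx0⟩, ?_⟩
        apply Subtype.ext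
        apply Subtype.ext
        show ι (x 0) = x
        exact hxs.symm
    exact (LinearEquiv.ofBijective g' hbij).symm.finrank_eq
  have h3 : Module.finrank F W + Module.finrank F N = Module.finrank F V := by
    rw [← hrange, ← hkerdim]
    exact LinearMap.finrank_range_add_finrank_ker ρ
  omega

end Aux

/-- Let `F` be a field, `M` a finite-dimensional `F`-vector space of dimension `d`, `D` a
natural number, and `V` a subspace of `M ^ D` (of finite codimension, which is automatic
here since `M ^ D` is finite-dimensional). Then there exist `v₁, …, v_d ∈ V` such that the
number of indices `i` for which `v₁ i, …, v_d i` do not span `M` is at most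
`codim_{M ^ D} V`. -/
theorem stmt_8 (F : Type*) [Field F] (M : Type*) [AddCommGroup M] [Module F M]
    [FiniteDimensional F M] (D : ℕ) (V : Submodule F (Fin D → M)) :
    ∃ v : Fin (Module.finrank F M) → (Fin D → M),
      (∀ j, v j ∈ V) ∧
      {i : Fin D | Submodule.span F (Set.range fun j => v j i) ≠ ⊤}.ncard ≤
        Module.finrank F ((Fin D → M) ⧸ V) := by
  induction D with
  | zero =>
    refine ⟨0, fun j => V.zero_mem, ?_⟩
    have h0 : ∀ s : Set (Fin 0), s.ncard = 0 := fun s => by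
      rw [Set.eq_empty_of_isEmpty s]; exact Set.ncard_empty _
    simp [h0]
  | succ D ih =>
    set π : (Fin (D + 1) → M) →ₗ[F] (Fin D → M) := LinearMap.funLeft F M Fin.succ with hπ
    set ι : M →ₗ[F] (Fin (D + 1) → M) := LinearMap.single F (fun _ : Fin (D + 1) => M) 0 with hι
    set W := V.map π with hW
    set N := V.comap ι with hN
    obtain ⟨v', hv'mem, hv'card⟩ := ih W
    choose u hu hπu using fun j => Submodule.mem_map.mp (hv'mem j)
    have husucc : ∀ j i, u j i.succ = v' j i := by
      intro j i
      rw [← hπu j]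
      rfl
    have hdim : Module.finrank F ((Fin D → M) ⧸ W) +
        (Module.finrank F M - Module.finrank F N) ≤
        Module.finrank F ((Fin (D + 1) → M) ⧸ V) := aux_dim F M D V
    by_cases hNtop : N = ⊤
    · -- can fix coordinate 0 to a basis
      have hNrank : Module.finrank F N = Module.finrank F M := by
        rw [hNtop]; exact finrank_top F M
      let b := Module.finBasis F M
      set w : Fin (Module.finrank F M) → Fin (D + 1) → M :=
        fun j => u j + ι (b j - u j 0) with hw
      refine ⟨w, ?_, ?_⟩
      · intro j
        refine V.add_mem (hu j) ?_
        have : (b j - u j 0) ∈ N := hNtop ▸ Submodule.mem_top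
        exact this
      · have hfun0 : (fun j => w j 0) = ⇑b := by
          funext j; simp [hw, hι]
        have hfun : ∀ i : Fin D, (fun j => w j i.succ) = fun j => v' j i := by
          intro i; funext j
          simp [hw, hι, Pi.single_eq_of_ne (Fin.succ_ne_zero i), husucc]
        have hset : {i : Fin (D + 1) |
            Submodule.span F (Set.range fun j => w j i) ≠ ⊤} =
            Fin.succ '' {i : Fin D | Submodule.span F (Set.range fun j => v' j i) ≠ ⊤} := by
          ext i
          refine Fin.cases ?_ ?_ i
          · simp only [Set.mem_setOf_eq, Set.mem_image]
            rw [congrArg Set.range hfun0, b.span_eq]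
            simp [Fin.succ_ne_zero]
          · intro k
            simp only [Set.mem_setOf_eq, Set.mem_image]
            rw [congrArg Set.range (hfun k)]
            constructor
            · intro h
              exact ⟨k, h, rfl⟩
            · rintro ⟨k', hk', hkk⟩
              rwa [← Fin.succ_injective _ hkk]
        rw [hset, Set.ncard_image_of_injective _ (Fin.succ_injective D)]
        calc {i : Fin D | Submodule.span F (Set.range fun j => v' j i) ≠ ⊤}.ncard
            ≤ Module.finrank F ((Fin D → M) ⧸ W) := hv'card
          _ ≤ Module.finrank F ((Fin (D + 1) → M) ⧸ V) := by omega
    · -- coordinate 0 may be bad, but codimension drops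
      have hNlt : Module.finrank F N < Module.finrank F M :=
        Submodule.finrank_lt hNtop
      refine ⟨u, hu, ?_⟩
      have hsub : {i : Fin (D + 1) | Submodule.span F (Set.range fun j => u j i) ≠ ⊤} ⊆
          insert 0 (Fin.succ '' {i : Fin D | Submodule.span F (Set.range fun j => v' j i) ≠ ⊤}) := by
        intro i hi
        refine Fin.cases ?_ ?_ i hi
        · intro _; exact Set.mem_insert _ _
        · intro k hk
          refine Set.mem_insert_of_mem _ ⟨k, ?_, rfl⟩
          simpa [husucc] using hk
      calc {i : Fin (D + 1) | Submodule.span F (Set.range fun j => u j i) ≠ ⊤}.ncard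
          ≤ (insert (0 : Fin (D + 1))
              (Fin.succ '' {i : Fin D | Submodule.span F (Set.range fun j => v' j i) ≠ ⊤})).ncard :=
            Set.ncard_le_ncard hsub (Set.toFinite _)
        _ ≤ (Fin.succ '' {i : Fin D | Submodule.span F (Set.range fun j => v' j i) ≠ ⊤}).ncard + 1 :=
            Set.ncard_insert_le _ _
        _ ≤ Module.finrank F ((Fin D → M) ⧸ W) + 1 := by
            rw [Set.ncard_image_of_injective _ (Fin.succ_injective D)]
            omega
        _ ≤ Module.finrank F ((Fin (D + 1) → M) ⧸ V) := by omega
end
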